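/- Nonstandard characterization of uniform convergence (the condition distinguishing Cauchy's 1853 sum theorem from pointwise convergence): let F : ℕ → ℝ → ℝ be a sequence of functions and f : ℝ → ℝ. Then F tends to f uniformly on ℝ (TendstoUniformly F f atTop) if and only if for every hypernatural N : Filter.Germ (Filter.hyperfilter ℕ) ℕ that is infinite (i.e. (m : Filter.Germ (Filter.hyperfilter ℕ) ℕ) < N for every natural number m) and every hyperreal x, the hyperreal Filter.Germ.map₂ F N x − (Filter.Germ.map f) x is infinitesimal. -/

import Mathlib

theorem tendstoUniformly_iff_infinitesimal (F : ℕ → ℝ → ℝ) (f : ℝ → ℝ) :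
    TendstoUniformly F f Filter.atTop ↔
      ∀ N : Filter.Germ (Filter.hyperfilter ℕ : Filter ℕ) ℕ,
        (∀ m : ℕ, (m : Filter.Germ (Filter.hyperfilter ℕ : Filter ℕ) ℕ) < N) →
        ∀ x : ℝ*,
          Hyperreal.Infinitesimal (Filter.Germ.map₂ F N x - Filter.Germ.map f x) := by
  have hcof : ∀ n : ℕ → ℕ, (∀ k, k ≤ n k) →
      ∀ m : ℕ, (m : Filter.Germ (Filter.hyperfilter ℕ : Filter ℕ) ℕ) < Filter.Germ.ofFun n := by
    intro n hn m
    refine Filter.Germ.coe_lt.2 ?_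
    have hev : ∀ᶠ k in Filter.cofinite, m < k := by
      rw [Nat.cofinite_eq_atTop]; exact Filter.eventually_gt_atTop m
    exact (hev.filter_mono (Filter.hyperfilter_le_cofinite)).mono
      fun k hk => lt_of_lt_of_le hk (hn k)
  constructor
  · intro h N hN x
    induction N using Filter.Germ.inductionOn with | h n =>
    induction x using Filter.Germ.inductionOn with | h u =>
    refine Hyperreal.infinitesimal_def.2 ?_
    intro ε hε
    rw [Metric.tendstoUniformly_iff] at h
    obtain ⟨m, hm⟩ := Filter.eventually_atTop.1 (h ε hε)
    have hmN : ∀ᶠ k in (Filter.hyperfilter ℕ : Filter ℕ), m < n k :=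
      Filter.Germ.coe_lt.1 (hN m)
    have key : ∀ᶠ k in (Filter.hyperfilter ℕ : Filter ℕ),
        -ε < F (n k) (u k) - f (u k) ∧ F (n k) (u k) - f (u k) < ε := by
      filter_upwards [hmN] with k hk
      have := hm (n k) hk.le (u k)
      rw [Real.dist_eq, abs_lt] at this
      constructor <;> linarith [this.1, this.2]
    have heq : Filter.Germ.map₂ F
          (Filter.Germ.ofFun n : Filter.Germ (Filter.hyperfilter ℕ : Filter ℕ) ℕ)
          (Filter.Germ.ofFun u : ℝ*)
        - Filter.Germ.map f (Filter.Germ.ofFun u : ℝ*)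
        = (Filter.Germ.ofFun (fun k => F (n k) (u k) - f (u k)) : ℝ*) := by
      rw [Filter.Germ.map₂_coe, Filter.Germ.map_coe, ← Filter.Germ.coe_sub]; rfl
    rw [heq]
    constructor
    · rw [show -((ε : ℝ) : ℝ*) = ((-ε : ℝ) : ℝ*) from (Hyperreal.coe_neg ε).symm]
      exact Filter.Germ.coe_lt.2 (key.mono fun k hk => hk.1)
    · exact Filter.Germ.coe_lt.2 (key.mono fun k hk => hk.2)
  · intro h
    rw [Metric.tendstoUniformly_iff]
    by_contra hc
    push_neg at hc
    obtain ⟨ε, hε, hfreq⟩ := hc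
    try rw [Filter.not_eventually] at hfreq
    have hfreq' : ∀ k : ℕ, ∃ b, k ≤ b ∧ ∃ x, ε ≤ dist (f x) (F b x) := by
      intro k
      obtain ⟨b, hb, hx⟩ := Filter.frequently_atTop.1 hfreq k
      try push_neg at hx
      obtain ⟨x, hx⟩ := hx
      exact ⟨b, hb, x, hx⟩
    choose n hn u hu using hfreq'
    have := h (Filter.Germ.ofFun n) (hcof n hn) (Filter.Germ.ofFun u : ℝ*)
    replace this := Hyperreal.infinitesimal_def.1 this
    obtain ⟨h1, h2⟩ := this ε hε
    have heq : Filter.Germ.map₂ F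
          (Filter.Germ.ofFun n : Filter.Germ (Filter.hyperfilter ℕ : Filter ℕ) ℕ)
          (Filter.Germ.ofFun u : ℝ*)
        - Filter.Germ.map f (Filter.Germ.ofFun u : ℝ*)
        = (Filter.Germ.ofFun (fun k => F (n k) (u k) - f (u k)) : ℝ*) := by
      rw [Filter.Germ.map₂_coe, Filter.Germ.map_coe, ← Filter.Germ.coe_sub]; rfl
    rw [heq, show -((ε : ℝ) : ℝ*) = ((-ε : ℝ) : ℝ*) from (Hyperreal.coe_neg ε).symm] at h1
    rw [heq] at h2
    obtain ⟨k, hk1, hk2⟩ := ((Filter.Germ.coe_lt.1 h1).and (Filter.Germ.coe_lt.1 h2)).exists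
    have habs : |F (n k) (u k) - f (u k)| < ε := abs_lt.2 ⟨hk1, hk2⟩
    have := hu k
    rw [Real.dist_eq, abs_sub_comm] at this
    linarith
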